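/- For every n ≥ 1 and every x ≥ 0, the second central moment Ω₂ := K_n^μ((ξ−x)²; x) satisfies Ω₂ = (1 + 2 e_μ(−nx)[μ Q(−1) + Q'(1) − (Λ_μ Q)(1)]/(Q(1) e_μ(nx))) · (x/n) + e_μ(−nx)(Λ_μ Q)(1)/(Q(1) n² e_μ(nx)) + [2Q''(1) − (Λ_μ Q)'(1) − (Λ_μ Q')(1) + Q'(1) − 2μ Q'(−1)](e_μ(nx) − e_μ(−nx))/(Q(1) n² e_μ(nx)) + [(Λ_μ² Q)(1) + 2μ (Λ_μ Q)(−1)]/(Q(1) n²). -/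

import Mathlib

open scoped BigOperators

/-- The Dunkl coefficients γ_μ(i). -/
noncomputable def gammaMu (μ : ℝ) (i : ℕ) : ℝ :=
  if Even i then
    2 ^ i * (Nat.factorial (i / 2)) *
      Real.Gamma (((i / 2 : ℕ) : ℝ) + μ + 1 / 2) / Real.Gamma (μ + 1 / 2)
  else
    2 ^ i * (Nat.factorial (i / 2)) *
      Real.Gamma (((i / 2 : ℕ) : ℝ) + μ + 3 / 2) / Real.Gamma (μ + 1 / 2)

/-- θ_i = 0 if i is even, 1 if i is odd. -/
noncomputable def thetaFn (i : ℕ) : ℝ := if Even i then 0 else 1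

/-- The Dunkl exponential e_μ(x) = Σ x^i / γ_μ(i). -/
noncomputable def dunklExp (μ : ℝ) (x : ℝ) : ℝ := ∑' i : ℕ, x ^ i / gammaMu μ i

/-- The Dunkl operator (Λ_μ f)(x) = f'(x) + μ (f(x) - f(-x)) / x. -/
noncomputable def dunklOp (μ : ℝ) (f : ℝ → ℝ) (x : ℝ) : ℝ :=
  deriv f x + μ * (f x - f (-x)) / x

/-- Q(t) = Σ c_i t^i / γ_μ(i). -/
noncomputable def Qf (μ : ℝ) (c : ℕ → ℝ) (t : ℝ) : ℝ := ∑' i : ℕ, c i * t ^ i / gammaMu μ i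

/-- The Dunkl–Appell polynomials q_i(x) = Σ_{j=0}^i (γ_μ(i)/(γ_μ(j)γ_μ(i-j))) c_{i-j} x^j. -/
noncomputable def qPoly (μ : ℝ) (c : ℕ → ℝ) (i : ℕ) (x : ℝ) : ℝ :=
  ∑ j ∈ Finset.range (i + 1),
    gammaMu μ i / (gammaMu μ j * gammaMu μ (i - j)) * c (i - j) * x ^ j

/-- The operators K_n^μ(f;x). -/
noncomputable def Kop (μ : ℝ) (c : ℕ → ℝ) (n : ℕ) (f : ℝ → ℝ) (x : ℝ) : ℝ :=
  1 / (Qf μ c 1 * dunklExp μ (n * x)) *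
    ∑' i : ℕ, qPoly μ c i (n * x) / gammaMu μ i * f (((i : ℝ) + 2 * μ * thetaFn i) / n)

/-- b_i = i + 2 μ θ_i. -/
noncomputable def bco (μ : ℝ) (i : ℕ) : ℝ := (i : ℝ) + 2 * μ * thetaFn i

lemma thetaFn_even {i : ℕ} (h : Even i) : thetaFn i = 0 := by simp [thetaFn, h]
lemma thetaFn_odd {i : ℕ} (h : ¬ Even i) : thetaFn i = 1 := by simp [thetaFn, h]

lemma thetaFn_nonneg (i : ℕ) : 0 ≤ thetaFn i := by
  unfold thetaFn; split <;> norm_num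

lemma thetaFn_le_one (i : ℕ) : thetaFn i ≤ 1 := by
  unfold thetaFn; split <;> norm_num

lemma bco_nonneg {μ : ℝ} (hμ : 0 ≤ μ) (i : ℕ) : 0 ≤ bco μ i := by
  have := thetaFn_nonneg i
  unfold bco; positivity

lemma bco_zero (μ : ℝ) : bco μ 0 = 0 := by
  simp [bco, thetaFn_even (Even.zero)]

lemma bco_succ_pos {μ : ℝ} (hμ : 0 ≤ μ) (i : ℕ) : 0 < bco μ (i + 1) := by
  have h1 := thetaFn_nonneg (i + 1)
  unfold bco
  have : (0:ℝ) < ((i:ℝ) + 1) := by positivity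
  push_cast
  nlinarith

lemma gammaMu_pos {μ : ℝ} (hμ : 0 ≤ μ) (i : ℕ) : 0 < gammaMu μ i := by
  have hG : 0 < Real.Gamma (μ + 1 / 2) := Real.Gamma_pos_of_pos (by linarith)
  have hf : (0:ℝ) < (Nat.factorial (i / 2) : ℝ) := by positivity
  unfold gammaMu
  split
  · have : 0 < Real.Gamma (((i / 2 : ℕ) : ℝ) + μ + 1 / 2) :=
      Real.Gamma_pos_of_pos (by positivity)
    positivity
  · have : 0 < Real.Gamma (((i / 2 : ℕ) : ℝ) + μ + 3 / 2) :=
      Real.Gamma_pos_of_pos (by positivity)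
    positivity

lemma gammaMu_zero {μ : ℝ} (hμ : 0 ≤ μ) : gammaMu μ 0 = 1 := by
  have hG : 0 < Real.Gamma (μ + 1 / 2) := Real.Gamma_pos_of_pos (by linarith)
  simp [gammaMu]
  field_simp
  exact (Real.Gamma_pos_of_pos (by linarith)).ne'

lemma gammaMu_succ {μ : ℝ} (hμ : 0 ≤ μ) (i : ℕ) :
    gammaMu μ (i + 1) = bco μ (i + 1) * gammaMu μ i := by
  rcases Nat.even_or_odd i with h | h
  · obtain ⟨m, rfl⟩ := h
    have h1 : ¬ Even (m + m + 1) := by simp [Nat.even_add_one, Nat.even_add]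
    have h2 : Even (m + m) := ⟨m, rfl⟩
    have hd1 : (m + m + 1) / 2 = m := by omega
    have hd2 : (m + m) / 2 = m := by omega
    have hz : ((m:ℝ) + μ + 1/2) ≠ 0 := by positivity
    have hG : ((m:ℝ) + μ + 3/2) = ((m:ℝ) + μ + 1/2) + 1 := by ring
    rw [gammaMu, gammaMu, if_neg h1, if_pos h2, hd1, hd2, bco, thetaFn_odd h1, hG,
      Real.Gamma_add_one hz]
    push_cast
    ring
  · obtain ⟨m, rfl⟩ := h
    have h1 : Even (2*m + 1 + 1) := by refine ⟨m+1, by omega⟩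
    have h2 : ¬ Even (2*m + 1) := by simp [Nat.even_add_one, Nat.even_mul]
    have hd1 : (2*m + 1 + 1) / 2 = m + 1 := by omega
    have hd2 : (2*m + 1) / 2 = m := by omega
    rw [gammaMu, gammaMu, if_pos h1, if_neg h2, hd1, hd2, bco, thetaFn_even h1]
    have : ((m:ℝ) + 1) + μ + 1/2 = (m:ℝ) + μ + 3/2 := by ring
    push_cast [Nat.factorial_succ, this]
    ring

lemma factorial_le_gammaMu {μ : ℝ} (hμ : 0 ≤ μ) (i : ℕ) :
    (Nat.factorial i : ℝ) ≤ gammaMu μ i := by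
  induction i with
  | zero => simp [gammaMu_zero hμ]
  | succ j ih =>
    rw [gammaMu_succ hμ]
    have h1 : ((j:ℝ) + 1) ≤ bco μ (j + 1) := by
      have := thetaFn_nonneg (j + 1)
      unfold bco; push_cast; nlinarith
    have h2 : (0:ℝ) ≤ (Nat.factorial j : ℝ) := by positivity
    calc (Nat.factorial (j+1) : ℝ) = ((j:ℝ)+1) * (Nat.factorial j : ℝ) := by
          push_cast [Nat.factorial_succ]; ring
      _ ≤ bco μ (j+1) * gammaMu μ j := by
          have := gammaMu_pos hμ j
          have hb := bco_succ_pos hμ j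
          nlinarith

/-- normalized summability predicate -/
def SFam (μ : ℝ) (d : ℕ → ℝ) : Prop :=
  ∀ t : ℝ, Summable fun k : ℕ => |d k| * |t| ^ k / gammaMu μ k

lemma sfam_of_hQ {μ : ℝ} (hμ : 0 ≤ μ) {d : ℕ → ℝ}
    (H : ∀ t : ℝ, Summable fun i : ℕ => |d i * t ^ i / gammaMu μ i|) : SFam μ d := by
  intro t
  refine (H t).congr fun k => ?_
  rw [abs_div, abs_mul, abs_pow, abs_of_pos (gammaMu_pos hμ k)]

lemma sfam_one {μ : ℝ} (hμ : 0 ≤ μ) : SFam μ (fun _ => (1:ℝ)) := by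
  intro t
  have hs : Summable fun k : ℕ => |t| ^ k / (Nat.factorial k : ℝ) :=
    Real.summable_pow_div_factorial |t|
  refine hs.of_nonneg_of_le (fun k => ?_) fun k => ?_
  · have := gammaMu_pos hμ k
    positivity
  · have h1 := factorial_le_gammaMu hμ k
    have h2 : (0:ℝ) < (Nat.factorial k : ℝ) := by positivity
    have h3 : (0:ℝ) ≤ |t| ^ k := by positivity
    simp only [abs_one, one_mul]
    exact div_le_div_of_nonneg_left h3 h2 h1

lemma cast_le_two_pow (k : ℕ) : (k : ℝ) ≤ 2 ^ k := by
  have h := (Nat.lt_two_pow_self (n := k)).le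
  exact_mod_cast h

lemma summable_weighted_abs {μ : ℝ} {d : ℕ → ℝ} (hμ : 0 ≤ μ) (H : SFam μ d)
    {w : ℕ → ℝ} {C B : ℝ} (hB : 0 ≤ B) (hw : ∀ k, |w k| ≤ C * B ^ k) (t : ℝ) :
    Summable fun k : ℕ => |d k * w k * t ^ k / gammaMu μ k| := by
  refine ((H (B * t)).mul_left C).of_nonneg_of_le (fun k => abs_nonneg _) fun k => ?_
  have hγ := gammaMu_pos hμ k
  have h1 : |d k * w k * t ^ k / gammaMu μ k| = |w k| * (|d k| * |t| ^ k / gammaMu μ k) := by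
    rw [abs_div, abs_mul, abs_mul, abs_pow, abs_of_pos hγ]; ring
  rw [h1]
  have h2 : |B * t| ^ k = B ^ k * |t| ^ k := by
    rw [abs_mul, abs_of_nonneg hB, mul_pow]
  rw [h2]
  have h3 : (0:ℝ) ≤ |d k| * |t| ^ k / gammaMu μ k := by positivity
  calc |w k| * (|d k| * |t| ^ k / gammaMu μ k)
      ≤ (C * B ^ k) * (|d k| * |t| ^ k / gammaMu μ k) := by
        exact mul_le_mul_of_nonneg_right (hw k) h3
    _ = C * (|d k| * (B ^ k * |t| ^ k) / gammaMu μ k) := by ring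

lemma summable_weighted {μ : ℝ} {d : ℕ → ℝ} (hμ : 0 ≤ μ) (H : SFam μ d)
    {w : ℕ → ℝ} {C B : ℝ} (hB : 0 ≤ B) (hw : ∀ k, |w k| ≤ C * B ^ k) (t : ℝ) :
    Summable fun k : ℕ => d k * w k * t ^ k / gammaMu μ k :=
  summable_abs_iff.mp (summable_weighted_abs hμ H hB hw t)

lemma wbound_one : ∀ k : ℕ, |(1:ℝ)| ≤ 1 * (1:ℝ) ^ k := by intro k; norm_num

lemma wbound_theta : ∀ k : ℕ, |thetaFn k| ≤ 1 * (1:ℝ) ^ k := by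
  intro k
  rw [abs_of_nonneg (thetaFn_nonneg k)]
  simpa using thetaFn_le_one k

lemma wbound_bco {μ : ℝ} (hμ : 0 ≤ μ) : ∀ k : ℕ, |bco μ k| ≤ (1 + 2*μ) * (2:ℝ) ^ k := by
  intro k
  rw [abs_of_nonneg (bco_nonneg hμ k)]
  have h1 := cast_le_two_pow k
  have h2 := thetaFn_le_one k
  have h3 := thetaFn_nonneg k
  have h4 : (1:ℝ) ≤ 2 ^ k := one_le_pow₀ (by norm_num)
  unfold bco
  nlinarith

lemma wbound_bco2 {μ : ℝ} (hμ : 0 ≤ μ) :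
    ∀ k : ℕ, |bco μ k * bco μ k| ≤ ((1 + 2*μ)*(1 + 2*μ)) * (4:ℝ) ^ k := by
  intro k
  have h := wbound_bco hμ k
  have hb := bco_nonneg hμ k
  rw [abs_of_nonneg hb] at h
  rw [abs_mul, abs_of_nonneg hb]
  have h4 : ((4:ℝ)) ^ k = (2:ℝ)^k * 2^k := by rw [← mul_pow]; norm_num
  rw [h4]
  nlinarith [pow_nonneg (by norm_num : (0:ℝ) ≤ 2) k]

lemma wbound_thetabco {μ : ℝ} (hμ : 0 ≤ μ) :
    ∀ k : ℕ, |thetaFn k * bco μ k| ≤ (1 + 2*μ) * (2:ℝ) ^ k := by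
  intro k
  have h := wbound_bco hμ k
  rw [abs_mul, abs_of_nonneg (thetaFn_nonneg k)]
  have h2 := thetaFn_le_one k
  have h3 := thetaFn_nonneg k
  nlinarith [abs_nonneg (bco μ k)]

/-- generalized series with descending factorial coefficients -/
noncomputable def dser (μ : ℝ) (d : ℕ → ℝ) (m : ℕ) (t : ℝ) : ℝ :=
  ∑' k : ℕ, d k * ((Nat.descFactorial k m : ℝ) * t ^ (k - m)) / gammaMu μ k

lemma dF_term_bound {m k : ℕ} {s R : ℝ} (hR : 1 ≤ R) (hs : |s| ≤ R) :
    |(Nat.descFactorial k m : ℝ) * s ^ (k - m)| ≤ (2 ^ m * R) ^ k := by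
  have h0 : (0:ℝ) < R := lt_of_lt_of_le one_pos hR
  rw [abs_mul, abs_pow]
  have h1 : |(Nat.descFactorial k m : ℝ)| ≤ ((2:ℝ) ^ m) ^ k := by
    rw [abs_of_nonneg (by positivity)]
    have ha : (Nat.descFactorial k m : ℝ) ≤ (k : ℝ) ^ m := by
      exact_mod_cast Nat.descFactorial_le_pow k m
    have hb : (k : ℝ) ^ m ≤ ((2:ℝ) ^ k) ^ m :=
      pow_le_pow_left₀ (by positivity) (cast_le_two_pow k) m
    calc (Nat.descFactorial k m : ℝ) ≤ ((2:ℝ) ^ k) ^ m := ha.trans hb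
      _ = ((2:ℝ) ^ m) ^ k := pow_right_comm 2 k m
  have h2 : |s| ^ (k - m) ≤ R ^ k := by
    calc |s| ^ (k - m) ≤ R ^ (k - m) := pow_le_pow_left₀ (abs_nonneg s) hs _
      _ ≤ R ^ k := pow_le_pow_right₀ hR (Nat.sub_le k m)
  calc |(Nat.descFactorial k m : ℝ)| * |s| ^ (k - m)
      ≤ ((2:ℝ) ^ m) ^ k * R ^ k := by
        exact mul_le_mul h1 h2 (by positivity) (by positivity)
    _ = (2 ^ m * R) ^ k := (mul_pow _ _ _).symm

lemma dser_term_abs_le {μ : ℝ} {d : ℕ → ℝ} (hμ : 0 ≤ μ) (m : ℕ) {s R : ℝ}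
    (hR : 1 ≤ R) (hs : |s| ≤ R) (k : ℕ) :
    |d k * ((Nat.descFactorial k m : ℝ) * s ^ (k - m)) / gammaMu μ k| ≤
      |d k| * |2 ^ m * R| ^ k / gammaMu μ k := by
  have hγ := gammaMu_pos hμ k
  have h0 : (0:ℝ) < R := lt_of_lt_of_le one_pos hR
  have h2 : |(2:ℝ) ^ m * R| ^ k = ((2:ℝ) ^ m * R) ^ k := by
    rw [abs_of_pos (by positivity)]
  rw [abs_div, abs_mul, abs_of_pos hγ, h2]
  gcongr
  exact dF_term_bound hR hs

lemma summable_dser_term {μ : ℝ} {d : ℕ → ℝ} (hμ : 0 ≤ μ) (H : SFam μ d) (m : ℕ)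
    {s R : ℝ} (hR : 1 ≤ R) (hs : |s| ≤ R) :
    Summable fun k : ℕ => d k * ((Nat.descFactorial k m : ℝ) * s ^ (k - m)) / gammaMu μ k := by
  rw [← summable_abs_iff]
  exact (H (2 ^ m * R)).of_nonneg_of_le (fun k => abs_nonneg _)
    (fun k => dser_term_abs_le hμ m hR hs k)

lemma summable_dser_term' {μ : ℝ} {d : ℕ → ℝ} (hμ : 0 ≤ μ) (H : SFam μ d) (m : ℕ) (s : ℝ) :
    Summable fun k : ℕ => d k * ((Nat.descFactorial k m : ℝ) * s ^ (k - m)) / gammaMu μ k := by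
  have hR : 1 ≤ |s| + 1 := by have := abs_nonneg s; linarith
  exact summable_dser_term hμ H m hR (by linarith)

lemma hasDerivAt_dser {μ : ℝ} {d : ℕ → ℝ} (hμ : 0 ≤ μ) (H : SFam μ d) (m : ℕ) (t : ℝ) :
    HasDerivAt (dser μ d m) (dser μ d (m + 1) t) t := by
  set R := |t| + 1 with hRdef
  have hR1 : 1 ≤ R := by rw [hRdef]; have := abs_nonneg t; linarith
  have h0R : (0:ℝ) < R := lt_of_lt_of_le one_pos hR1
  have hopen : IsOpen (Metric.ball (0:ℝ) R) := Metric.isOpen_ball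
  have hmem : t ∈ Metric.ball (0:ℝ) R := by
    rw [Metric.mem_ball, Real.dist_eq, sub_zero, hRdef]; linarith
  have hball : ∀ x ∈ Metric.ball (0:ℝ) R, |x| ≤ R := by
    intro x hx
    rw [Metric.mem_ball, Real.dist_eq, sub_zero] at hx
    exact hx.le
  have hunif : TendstoUniformlyOn
      (fun N x => ∑ k ∈ Finset.range N,
        d k * ((Nat.descFactorial k (m+1) : ℝ) * x ^ (k - (m+1))) / gammaMu μ k)
      (fun x => dser μ d (m+1) x) Filter.atTop (Metric.ball 0 R) := by
    apply tendstoUniformlyOn_tsum_nat (H (2 ^ (m+1) * R))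
    intro k x hx
    rw [Real.norm_eq_abs]
    exact dser_term_abs_le hμ (m+1) hR1 (hball x hx) k
  have hf : ∀ᶠ N in Filter.atTop, ∀ x ∈ Metric.ball (0:ℝ) R,
      HasDerivAt (fun s => ∑ k ∈ Finset.range N,
          d k * ((Nat.descFactorial k m : ℝ) * s ^ (k - m)) / gammaMu μ k)
        (∑ k ∈ Finset.range N,
          d k * ((Nat.descFactorial k (m+1) : ℝ) * x ^ (k - (m+1))) / gammaMu μ k) x := by
    apply Filter.Eventually.of_forall
    intro N x _
    apply HasDerivAt.fun_sum
    intro k _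
    have hp := (hasDerivAt_pow (k - m) x).const_mul
      (d k * (Nat.descFactorial k m : ℝ) / gammaMu μ k)
    have hfe : (fun s : ℝ => d k * (Nat.descFactorial k m : ℝ) / gammaMu μ k * s ^ (k - m)) =
        fun s : ℝ => d k * ((Nat.descFactorial k m : ℝ) * s ^ (k - m)) / gammaMu μ k := by
      funext s; ring
    rw [hfe] at hp
    have hval : d k * (Nat.descFactorial k m : ℝ) / gammaMu μ k *
          (↑(k - m) * x ^ (k - m - 1)) =
        d k * ((Nat.descFactorial k (m+1) : ℝ) * x ^ (k - (m+1))) / gammaMu μ k := by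
      have hdf : (Nat.descFactorial k (m+1) : ℝ) =
          ((k - m : ℕ) : ℝ) * (Nat.descFactorial k m : ℝ) := by
        rw [Nat.descFactorial_succ]; push_cast; ring
      rw [hdf, Nat.sub_sub]
      ring
    rw [hval] at hp
    exact hp
  have hfg : ∀ x ∈ Metric.ball (0:ℝ) R,
      Filter.Tendsto (fun N => ∑ k ∈ Finset.range N,
          d k * ((Nat.descFactorial k m : ℝ) * x ^ (k - m)) / gammaMu μ k)
        Filter.atTop (nhds (dser μ d m x)) := by
    intro x hx
    exact (summable_dser_term hμ H m hR1 (hball x hx)).hasSum.tendsto_sum_nat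
  exact hasDerivAt_of_tendstoUniformlyOn hopen hunif hf hfg hmem

lemma thetaFn_succ (j : ℕ) : thetaFn (j + 1) = 1 - thetaFn j := by
  rcases Nat.even_or_odd j with h | h
  · rw [thetaFn_even h, thetaFn_odd (by simpa [Nat.even_add_one] using h)]; ring
  · rw [thetaFn_odd (Nat.not_even_iff_odd.mpr h),
      thetaFn_even (by simpa [Nat.even_add_one] using Nat.not_even_iff_odd.mpr h)]; ring

lemma bco_succ {μ : ℝ} (j : ℕ) :
    bco μ (j + 1) = bco μ j + 1 + 2 * μ * (1 - 2 * thetaFn j) := by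
  unfold bco
  rw [thetaFn_succ j]
  push_cast
  ring

section Eside
variable {μ : ℝ} (hμ : 0 ≤ μ) (t : ℝ)
include hμ

lemma s_one : Summable fun j : ℕ => t ^ j / gammaMu μ j :=
  (summable_weighted hμ (sfam_one hμ) (by norm_num : (0:ℝ) ≤ 1) wbound_one t).congr
    fun j => by ring

lemma s_theta : Summable fun j : ℕ => thetaFn j * t ^ j / gammaMu μ j :=
  (summable_weighted hμ (sfam_one hμ) (by norm_num : (0:ℝ) ≤ 1) wbound_theta t).congr
    fun j => by ring

lemma s_b : Summable fun j : ℕ => bco μ j * t ^ j / gammaMu μ j :=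
  (summable_weighted hμ (sfam_one hμ) (by norm_num : (0:ℝ) ≤ 2) (wbound_bco hμ) t).congr
    fun j => by ring

lemma s_thetab : Summable fun j : ℕ => thetaFn j * bco μ j * t ^ j / gammaMu μ j :=
  (summable_weighted hμ (sfam_one hμ) (by norm_num : (0:ℝ) ≤ 2) (wbound_thetabco hμ) t).congr
    fun j => by ring

lemma s_b2 : Summable fun j : ℕ => bco μ j * bco μ j * t ^ j / gammaMu μ j :=
  (summable_weighted hμ (sfam_one hμ) (by norm_num : (0:ℝ) ≤ 4) (wbound_bco2 hμ) t).congr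
    fun j => by ring

lemma hasSum_E : HasSum (fun j : ℕ => t ^ j / gammaMu μ j) (dunklExp μ t) :=
  (s_one hμ t).hasSum

lemma Su_theta : ∑' j : ℕ, thetaFn j * t ^ j / gammaMu μ j =
    (dunklExp μ t - dunklExp μ (-t)) / 2 := by
  have h1 : dunklExp μ t - dunklExp μ (-t) = ∑' j : ℕ, (t ^ j / gammaMu μ j - (-t) ^ j / gammaMu μ j) := by
    rw [dunklExp, dunklExp, ← Summable.tsum_sub (s_one hμ t) (s_one hμ (-t))]
  have h2 : ∀ j : ℕ, t ^ j / gammaMu μ j - (-t) ^ j / gammaMu μ j =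
      2 * (thetaFn j * t ^ j / gammaMu μ j) := by
    intro j
    rcases Nat.even_or_odd j with h | h
    · rw [h.neg_pow, thetaFn_even h]; ring
    · rw [h.neg_pow, thetaFn_odd (Nat.not_even_iff_odd.mpr h)]; ring
  rw [h1, tsum_congr h2, tsum_mul_left]
  ring

lemma hasSum_theta : HasSum (fun j : ℕ => thetaFn j * t ^ j / gammaMu μ j)
    ((dunklExp μ t - dunklExp μ (-t)) / 2) := by
  have := (s_theta hμ t).hasSum
  rwa [Su_theta hμ t] at this

lemma Su_b : ∑' j : ℕ, bco μ j * t ^ j / gammaMu μ j = t * dunklExp μ t := by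
  rw [Summable.tsum_eq_zero_add (s_b hμ t)]
  have h0 : bco μ 0 * t ^ 0 / gammaMu μ 0 = 0 := by rw [bco_zero]; ring
  rw [h0, zero_add]
  have h1 : ∀ j : ℕ, bco μ (j+1) * t ^ (j+1) / gammaMu μ (j+1) = t * (t ^ j / gammaMu μ j) := by
    intro j
    rw [gammaMu_succ hμ j, pow_succ]
    have hb := (bco_succ_pos hμ j).ne'
    have hγ := (gammaMu_pos hμ j).ne'
    field_simp
  rw [tsum_congr h1, tsum_mul_left, dunklExp]

lemma hasSum_b : HasSum (fun j : ℕ => bco μ j * t ^ j / gammaMu μ j) (t * dunklExp μ t) := by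
  have := (s_b hμ t).hasSum
  rwa [Su_b hμ t] at this

lemma Su_thetab : ∑' j : ℕ, thetaFn j * bco μ j * t ^ j / gammaMu μ j =
    t * (dunklExp μ t + dunklExp μ (-t)) / 2 := by
  rw [Summable.tsum_eq_zero_add (s_thetab hμ t)]
  have h0 : thetaFn 0 * bco μ 0 * t ^ 0 / gammaMu μ 0 = 0 := by rw [bco_zero]; ring
  rw [h0, zero_add]
  have h1 : ∀ j : ℕ, thetaFn (j+1) * bco μ (j+1) * t ^ (j+1) / gammaMu μ (j+1) =
      t * (t ^ j / gammaMu μ j) - t * (thetaFn j * t ^ j / gammaMu μ j) := by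
    intro j
    rw [gammaMu_succ hμ j, pow_succ, thetaFn_succ j]
    have hb := (bco_succ_pos hμ j).ne'
    have hγ := (gammaMu_pos hμ j).ne'
    field_simp
  rw [tsum_congr h1]
  have hs := ((hasSum_E hμ t).mul_left t).sub ((hasSum_theta hμ t).mul_left t)
  rw [hs.tsum_eq]
  ring

lemma hasSum_thetab : HasSum (fun j : ℕ => thetaFn j * bco μ j * t ^ j / gammaMu μ j)
    (t * (dunklExp μ t + dunklExp μ (-t)) / 2) := by
  have := (s_thetab hμ t).hasSum
  rwa [Su_thetab hμ t] at this

lemma Su_b2 : ∑' j : ℕ, bco μ j * bco μ j * t ^ j / gammaMu μ j =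
    t * t * dunklExp μ t + t * dunklExp μ t + 2 * μ * t * dunklExp μ (-t) := by
  rw [Summable.tsum_eq_zero_add (s_b2 hμ t)]
  have h0 : bco μ 0 * bco μ 0 * t ^ 0 / gammaMu μ 0 = 0 := by rw [bco_zero]; ring
  rw [h0, zero_add]
  have h1 : ∀ j : ℕ, bco μ (j+1) * bco μ (j+1) * t ^ (j+1) / gammaMu μ (j+1) =
      t * (bco μ j * t ^ j / gammaMu μ j) + ((1 + 2*μ) * t) * (t ^ j / gammaMu μ j) -
        (4 * μ * t) * (thetaFn j * t ^ j / gammaMu μ j) := by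
    intro j
    rw [gammaMu_succ hμ j, pow_succ]
    have hb := (bco_succ_pos hμ j).ne'
    have hγ := (gammaMu_pos hμ j).ne'
    have hb1 : bco μ (j+1) = bco μ j + 1 + 2 * μ * (1 - 2 * thetaFn j) := bco_succ j
    field_simp
    nth_rewrite 1 [hb1]
    ring
  rw [tsum_congr h1]
  have hs := (((hasSum_b hμ t).mul_left t).add ((hasSum_E hμ t).mul_left ((1 + 2*μ) * t))).sub
    ((hasSum_theta hμ t).mul_left (4 * μ * t))
  rw [hs.tsum_eq]
  ring

lemma hasSum_b2 : HasSum (fun j : ℕ => bco μ j * bco μ j * t ^ j / gammaMu μ j)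
    (t * t * dunklExp μ t + t * dunklExp μ t + 2 * μ * t * dunklExp μ (-t)) := by
  have := (s_b2 hμ t).hasSum
  rwa [Su_b2 hμ t] at this

end Eside

lemma descFactorial_two_real (k : ℕ) :
    ((Nat.descFactorial k 2 : ℕ) : ℝ) = (k:ℝ) * (k:ℝ) - (k:ℝ) := by
  cases k with
  | zero => simp
  | succ j =>
    have : Nat.descFactorial (j+1) 2 = (j+1) * j := by
      rw [Nat.descFactorial_succ, Nat.descFactorial_one, Nat.add_sub_cancel]
      ring
    rw [this]
    push_cast
    ring

lemma mul_neg_pow_pred (k : ℕ) : (k:ℝ) * (-1:ℝ) ^ (k - 1) = -((k:ℝ) * (-1:ℝ) ^ k) := by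
  cases k with
  | zero => simp
  | succ j => rw [Nat.add_sub_cancel, pow_succ]; push_cast; ring

section Qside
variable {μ : ℝ} {c : ℕ → ℝ} (hμ : 0 ≤ μ) (Hc : SFam μ c)
include hμ Hc

lemma hA0' : HasSum (fun k : ℕ => c k * ((Nat.descFactorial k 0 : ℝ) * (1:ℝ) ^ (k - 0)) / gammaMu μ k)
    (dser μ c 0 1) := (summable_dser_term' hμ Hc 0 1).hasSum

lemma hA0m' : HasSum (fun k : ℕ => c k * ((Nat.descFactorial k 0 : ℝ) * (-1:ℝ) ^ (k - 0)) / gammaMu μ k)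
    (dser μ c 0 (-1)) := (summable_dser_term' hμ Hc 0 (-1)).hasSum

lemma hA1' : HasSum (fun k : ℕ => c k * ((Nat.descFactorial k 1 : ℝ) * (1:ℝ) ^ (k - 1)) / gammaMu μ k)
    (dser μ c 1 1) := (summable_dser_term' hμ Hc 1 1).hasSum

lemma hA1m' : HasSum (fun k : ℕ => c k * ((Nat.descFactorial k 1 : ℝ) * (-1:ℝ) ^ (k - 1)) / gammaMu μ k)
    (dser μ c 1 (-1)) := (summable_dser_term' hμ Hc 1 (-1)).hasSum

lemma hA2' : HasSum (fun k : ℕ => c k * ((Nat.descFactorial k 2 : ℝ) * (1:ℝ) ^ (k - 2)) / gammaMu μ k)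
    (dser μ c 2 1) := (summable_dser_term' hμ Hc 2 1).hasSum

lemma Qv_one : ∑' k : ℕ, c k / gammaMu μ k = dser μ c 0 1 := by
  rw [← (hA0' hμ Hc).tsum_eq]
  exact tsum_congr fun k => by simp

lemma Qv_theta : ∑' k : ℕ, c k * thetaFn k / gammaMu μ k =
    (dser μ c 0 1 - dser μ c 0 (-1)) / 2 := by
  have hs := ((hA0' hμ Hc).sub (hA0m' hμ Hc)).div_const 2
  rw [← hs.tsum_eq]
  refine tsum_congr fun k => ?_
  simp only [Nat.descFactorial_zero, Nat.cast_one, one_mul, Nat.sub_zero, one_pow]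
  rcases Nat.even_or_odd k with h | h
  · rw [thetaFn_even h, h.neg_one_pow]; ring
  · rw [thetaFn_odd (Nat.not_even_iff_odd.mpr h), h.neg_one_pow]; ring

lemma Qv_b : ∑' k : ℕ, c k * bco μ k / gammaMu μ k =
    dser μ c 1 1 + μ * (dser μ c 0 1 - dser μ c 0 (-1)) := by
  have hs := (hA1' hμ Hc).add (((hA0' hμ Hc).sub (hA0m' hμ Hc)).mul_left μ)
  rw [← hs.tsum_eq]
  refine tsum_congr fun k => ?_
  simp only [Nat.descFactorial_zero, Nat.descFactorial_one, Nat.cast_one, one_mul,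
    Nat.sub_zero, one_pow, mul_one]
  unfold bco
  rcases Nat.even_or_odd k with h | h
  · rw [thetaFn_even h, h.neg_one_pow]; ring
  · rw [thetaFn_odd (Nat.not_even_iff_odd.mpr h), h.neg_one_pow]; ring

lemma Qv_thetab : ∑' k : ℕ, c k * (thetaFn k * bco μ k) / gammaMu μ k =
    (dser μ c 1 1 + dser μ c 1 (-1)) / 2 + μ * (dser μ c 0 1 - dser μ c 0 (-1)) := by
  have hs := (((hA1' hμ Hc).add (hA1m' hμ Hc)).div_const 2).add
    (((hA0' hμ Hc).sub (hA0m' hμ Hc)).mul_left μ)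
  rw [← hs.tsum_eq]
  refine tsum_congr fun k => ?_
  simp only [Nat.descFactorial_zero, Nat.descFactorial_one, Nat.cast_one, one_mul,
    Nat.sub_zero, one_pow, mul_one]
  rw [mul_neg_pow_pred]
  unfold bco
  rcases Nat.even_or_odd k with h | h
  · rw [thetaFn_even h, h.neg_one_pow]; ring
  · rw [thetaFn_odd (Nat.not_even_iff_odd.mpr h), h.neg_one_pow]; ring

lemma Qv_b2 : ∑' k : ℕ, c k * (bco μ k * bco μ k) / gammaMu μ k =
    dser μ c 2 1 + dser μ c 1 1 + 2 * μ * (dser μ c 1 1 + dser μ c 1 (-1)) +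
      2 * μ^2 * (dser μ c 0 1 - dser μ c 0 (-1)) := by
  have hs := (((hA2' hμ Hc).add (hA1' hμ Hc)).add
      (((hA1' hμ Hc).add (hA1m' hμ Hc)).mul_left (2*μ))).add
    (((hA0' hμ Hc).sub (hA0m' hμ Hc)).mul_left (2*μ^2))
  rw [← hs.tsum_eq]
  refine tsum_congr fun k => ?_
  simp only [Nat.descFactorial_zero, Nat.descFactorial_one, Nat.cast_one, one_mul,
    Nat.sub_zero, one_pow, mul_one]
  rw [mul_neg_pow_pred, descFactorial_two_real]
  unfold bco
  rcases Nat.even_or_odd k with h | h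
  · rw [thetaFn_even h, h.neg_one_pow]; ring
  · rw [thetaFn_odd (Nat.not_even_iff_odd.mpr h), h.neg_one_pow]; ring

end Qside

lemma Qf_eq_dser (μ : ℝ) (c : ℕ → ℝ) : Qf μ c = dser μ c 0 := by
  funext t
  exact tsum_congr fun k => by simp

section Ops
variable {μ : ℝ} {c : ℕ → ℝ} (hμ : 0 ≤ μ) (Hc : SFam μ c)
include hμ Hc

lemma deriv_Qf_eq : deriv (Qf μ c) = dser μ c 1 := by
  funext t
  rw [Qf_eq_dser μ c]
  exact (hasDerivAt_dser hμ Hc 0 t).deriv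

lemma deriv2_Qf_one : deriv (deriv (Qf μ c)) 1 = dser μ c 2 1 := by
  rw [deriv_Qf_eq hμ Hc]
  exact (hasDerivAt_dser hμ Hc 1 1).deriv

lemma dunklOp_Qf_one : dunklOp μ (Qf μ c) 1 =
    dser μ c 1 1 + μ * (dser μ c 0 1 - dser μ c 0 (-1)) := by
  unfold dunklOp
  rw [deriv_Qf_eq hμ Hc, Qf_eq_dser μ c]
  field_simp

lemma dunklOp_Qf_neg_one : dunklOp μ (Qf μ c) (-1) =
    dser μ c 1 (-1) + μ * (dser μ c 0 1 - dser μ c 0 (-1)) := by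
  unfold dunklOp
  rw [deriv_Qf_eq hμ Hc, Qf_eq_dser μ c]
  have : -(-1 : ℝ) = 1 := by norm_num
  rw [this]
  field_simp
  ring

lemma dunklOp_derivQf_one : dunklOp μ (deriv (Qf μ c)) 1 =
    dser μ c 2 1 + μ * (dser μ c 1 1 - dser μ c 1 (-1)) := by
  unfold dunklOp
  rw [deriv_Qf_eq hμ Hc]
  rw [show deriv (dser μ c 1) 1 = dser μ c 2 1 from (hasDerivAt_dser hμ Hc 1 1).deriv]
  field_simp

lemma dunklOp_Qf_fun : dunklOp μ (Qf μ c) =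
    fun t => dser μ c 1 t + μ * (dser μ c 0 t - dser μ c 0 (-t)) / t := by
  funext t
  unfold dunklOp
  rw [deriv_Qf_eq hμ Hc, Qf_eq_dser μ c]

lemma deriv_dunklOp_Qf_one : deriv (dunklOp μ (Qf μ c)) 1 =
    dser μ c 2 1 + μ * (dser μ c 1 1 + dser μ c 1 (-1) -
      (dser μ c 0 1 - dser μ c 0 (-1))) := by
  rw [dunklOp_Qf_fun hμ Hc]
  have h1 : HasDerivAt (dser μ c 1) (dser μ c 2 1) 1 := hasDerivAt_dser hμ Hc 1 1
  have h0 : HasDerivAt (dser μ c 0) (dser μ c 1 1) 1 := hasDerivAt_dser hμ Hc 0 1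
  have hneg : HasDerivAt (fun t : ℝ => dser μ c 0 (-t)) (dser μ c 1 (-1) * (-1)) 1 := by
    have := (hasDerivAt_dser hμ Hc 0 (-(1:ℝ))).comp 1 (hasDerivAt_neg (1:ℝ))
    simpa [Function.comp_def] using this
  have hnum : HasDerivAt (fun t : ℝ => μ * (dser μ c 0 t - dser μ c 0 (-t)))
      (μ * (dser μ c 1 1 - dser μ c 1 (-1) * (-1))) 1 := (h0.sub hneg).const_mul μ
  have hq : HasDerivAt (fun t : ℝ => μ * (dser μ c 0 t - dser μ c 0 (-t)) / t)
      ((μ * (dser μ c 1 1 - dser μ c 1 (-1) * (-1)) * 1 -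
        μ * (dser μ c 0 1 - dser μ c 0 (-1)) * 1) / (1:ℝ) ^ 2) 1 := by
    have hid : HasDerivAt (fun t : ℝ => t) 1 (1:ℝ) := hasDerivAt_id' (1:ℝ)
    exact hnum.div hid one_ne_zero
  have := (h1.fun_add hq).deriv
  rw [this]
  norm_num
  ring

lemma dunklOp2_Qf_one : dunklOp μ (dunklOp μ (Qf μ c)) 1 =
    dser μ c 2 1 + 2 * μ * dser μ c 1 1 - μ * (dser μ c 0 1 - dser μ c 0 (-1)) := by
  conv_lhs => rw [dunklOp]
  rw [deriv_dunklOp_Qf_one hμ Hc, dunklOp_Qf_one hμ Hc, dunklOp_Qf_neg_one hμ Hc]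
  field_simp
  ring

end Ops

lemma thetaFn_add (j k : ℕ) : thetaFn (j + k) =
    thetaFn j + thetaFn k - 2 * thetaFn j * thetaFn k := by
  rcases Nat.even_or_odd j with hj | hj <;> rcases Nat.even_or_odd k with hk | hk
  · rw [thetaFn_even (hj.add hk), thetaFn_even hj, thetaFn_even hk]; ring
  · rw [thetaFn_odd (by simp [Nat.even_add, hj, Nat.not_even_iff_odd.mpr hk]),
      thetaFn_even hj, thetaFn_odd (Nat.not_even_iff_odd.mpr hk)]; ring
  · rw [thetaFn_odd (by simp [Nat.even_add, hk, Nat.not_even_iff_odd.mpr hj]),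
      thetaFn_odd (Nat.not_even_iff_odd.mpr hj), thetaFn_even hk]; ring
  · rw [thetaFn_even (hj.add_odd hk), thetaFn_odd (Nat.not_even_iff_odd.mpr hj),
      thetaFn_odd (Nat.not_even_iff_odd.mpr hk)]; ring

lemma bco_add (μ : ℝ) (j k : ℕ) :
    bco μ (j + k) = bco μ j + bco μ k - 4 * μ * (thetaFn j * thetaFn k) := by
  unfold bco
  rw [thetaFn_add]
  push_cast
  ring

set_option maxHeartbeats 4000000 in
/-- the second central moment Ω₂ of K_n^μ. -/
theorem Kop_second_central_moment (μ : ℝ) (hμ : 0 ≤ μ) (c : ℕ → ℝ) (hc0 : c 0 ≠ 0)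
    (hQ : ∀ t : ℝ, Summable fun i : ℕ => |c i * t ^ i / gammaMu μ i|)
    (hq : ∀ i : ℕ, ∀ x : ℝ, 0 ≤ x → 0 ≤ qPoly μ c i x)
    (hQ1 : 0 < Qf μ c 1)
    (n : ℕ) (hn : 1 ≤ n) (x : ℝ) (hx : 0 ≤ x) :
    Kop μ c n (fun ξ => (ξ - x) ^ 2) x =
      (1 + 2 * dunklExp μ (-(n * x)) *
            (μ * Qf μ c (-1) + deriv (Qf μ c) 1 - dunklOp μ (Qf μ c) 1) /
            (Qf μ c 1 * dunklExp μ (n * x))) * (x / n) +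
        dunklExp μ (-(n * x)) * dunklOp μ (Qf μ c) 1 /
          (Qf μ c 1 * n ^ 2 * dunklExp μ (n * x)) +
        (2 * deriv (deriv (Qf μ c)) 1 - deriv (dunklOp μ (Qf μ c)) 1 -
            dunklOp μ (deriv (Qf μ c)) 1 + deriv (Qf μ c) 1 - 2 * μ * deriv (Qf μ c) (-1)) *
          (dunklExp μ (n * x) - dunklExp μ (-(n * x))) /
          (Qf μ c 1 * n ^ 2 * dunklExp μ (n * x)) +
        (dunklOp μ (dunklOp μ (Qf μ c)) 1 + 2 * μ * dunklOp μ (Qf μ c) (-1)) /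
          (Qf μ c 1 * n ^ 2) := by
  have hn0 : ((n:ℝ)) ≠ 0 := Nat.cast_ne_zero.mpr (by omega)
  have Hc : SFam μ c := sfam_of_hQ hμ hQ
  simp only [Kop]
  set y : ℝ := (n:ℝ) * x with hy
  have hy0 : 0 ≤ y := by rw [hy]; positivity
  have hEpos : 0 < dunklExp μ y := by
    rw [dunklExp]
    refine Summable.tsum_pos (s_one hμ y) (fun j => ?_) 0 ?_
    · have := gammaMu_pos hμ j
      positivity
    · rw [pow_zero, gammaMu_zero hμ]; norm_num
  have hA0pos : 0 < dser μ c 0 1 := by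
    have := hQ1
    rwa [Qf_eq_dser μ c] at this
  -- norm-summability of the convolution factors
  have nu1 : Summable fun j : ℕ => ‖y ^ j / gammaMu μ j‖ :=
    (summable_weighted_abs hμ (sfam_one hμ) (by norm_num : (0:ℝ) ≤ 1) wbound_one y).congr
      fun j => by simp [Real.norm_eq_abs, abs_div, abs_mul, abs_pow]
  have nub : Summable fun j : ℕ => ‖bco μ j * y ^ j / gammaMu μ j‖ :=
    (summable_weighted_abs hμ (sfam_one hμ) (by norm_num : (0:ℝ) ≤ 2) (wbound_bco hμ) y).congr
      fun j => by simp [Real.norm_eq_abs, abs_div, abs_mul, abs_pow]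
  have nub2 : Summable fun j : ℕ => ‖bco μ j * bco μ j * y ^ j / gammaMu μ j‖ :=
    (summable_weighted_abs hμ (sfam_one hμ) (by norm_num : (0:ℝ) ≤ 4) (wbound_bco2 hμ) y).congr
      fun j => by simp [Real.norm_eq_abs, abs_div, abs_mul, abs_pow]
  have nuth : Summable fun j : ℕ => ‖thetaFn j * y ^ j / gammaMu μ j‖ :=
    (summable_weighted_abs hμ (sfam_one hμ) (by norm_num : (0:ℝ) ≤ 1) wbound_theta y).congr
      fun j => by simp [Real.norm_eq_abs, abs_div, abs_mul, abs_pow]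
  have nuthb : Summable fun j : ℕ => ‖thetaFn j * bco μ j * y ^ j / gammaMu μ j‖ :=
    (summable_weighted_abs hμ (sfam_one hμ) (by norm_num : (0:ℝ) ≤ 2) (wbound_thetabco hμ) y).congr
      fun j => by simp [Real.norm_eq_abs, abs_div, abs_mul, abs_pow]
  have nv1 : Summable fun k : ℕ => ‖c k / gammaMu μ k‖ :=
    (summable_weighted_abs hμ Hc (by norm_num : (0:ℝ) ≤ 1) wbound_one 1).congr
      fun k => by simp [Real.norm_eq_abs, abs_div, abs_mul, abs_pow]
  have nvb : Summable fun k : ℕ => ‖c k * bco μ k / gammaMu μ k‖ :=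
    (summable_weighted_abs hμ Hc (by norm_num : (0:ℝ) ≤ 2) (wbound_bco hμ) 1).congr
      fun k => by simp [Real.norm_eq_abs, abs_div, abs_mul, abs_pow]
  have nvb2 : Summable fun k : ℕ => ‖c k * (bco μ k * bco μ k) / gammaMu μ k‖ :=
    (summable_weighted_abs hμ Hc (by norm_num : (0:ℝ) ≤ 4) (wbound_bco2 hμ) 1).congr
      fun k => by simp [Real.norm_eq_abs, abs_div, abs_mul, abs_pow]
  have nvth : Summable fun k : ℕ => ‖c k * thetaFn k / gammaMu μ k‖ :=
    (summable_weighted_abs hμ Hc (by norm_num : (0:ℝ) ≤ 1) wbound_theta 1).congr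
      fun k => by simp [Real.norm_eq_abs, abs_div, abs_mul, abs_pow]
  have nvthb : Summable fun k : ℕ => ‖c k * (thetaFn k * bco μ k) / gammaMu μ k‖ :=
    (summable_weighted_abs hμ Hc (by norm_num : (0:ℝ) ≤ 2) (wbound_thetabco hμ) 1).congr
      fun k => by simp [Real.norm_eq_abs, abs_div, abs_mul, abs_pow]
  -- Cauchy product pieces
  have hP1 := hasSum_sum_range_mul_of_summable_norm nub2 nv1
  have hP2 := hasSum_sum_range_mul_of_summable_norm nu1 nvb2
  have hP3 := hasSum_sum_range_mul_of_summable_norm nuth nvth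
  have hP4 := hasSum_sum_range_mul_of_summable_norm nu1 nv1
  have hP5 := hasSum_sum_range_mul_of_summable_norm nub nvb
  have hP6 := hasSum_sum_range_mul_of_summable_norm nuthb nvth
  have hP7 := hasSum_sum_range_mul_of_summable_norm nuth nvthb
  have hP8 := hasSum_sum_range_mul_of_summable_norm nub nv1
  have hP9 := hasSum_sum_range_mul_of_summable_norm nu1 nvb
  rw [Su_b2 hμ y, Qv_one hμ Hc] at hP1
  rw [← dunklExp, Qv_b2 hμ Hc] at hP2
  rw [Su_theta hμ y, Qv_theta hμ Hc] at hP3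
  rw [← dunklExp, Qv_one hμ Hc] at hP4
  rw [Su_b hμ y, Qv_b hμ Hc] at hP5
  rw [Su_thetab hμ y, Qv_theta hμ Hc] at hP6
  rw [Su_theta hμ y, Qv_thetab hμ Hc] at hP7
  rw [Su_b hμ y, Qv_one hμ Hc] at hP8
  rw [← dunklExp, Qv_b hμ Hc] at hP9
  have htot := (((((((((hP1.add hP2).add (hP3.mul_left (16*μ^2 + 8*μ*y))).add
    (hP4.mul_left (y^2))).add (hP5.mul_left 2)).sub (hP6.mul_left (8*μ))).sub
    (hP7.mul_left (8*μ))).sub (hP8.mul_left (2*y))).sub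
    (hP9.mul_left (2*y))).mul_left ((1:ℝ)/(n:ℝ)^2))
  -- the per-index identity
  have key : ∀ i : ℕ,
      qPoly μ c i y / gammaMu μ i * (((i:ℝ) + 2 * μ * thetaFn i) / (n:ℝ) - x) ^ 2 =
      (1:ℝ)/(n:ℝ)^2 *
        ((∑ k ∈ Finset.range (i+1),
            bco μ k * bco μ k * y ^ k / gammaMu μ k * (c (i-k) / gammaMu μ (i-k)) +
          ∑ k ∈ Finset.range (i+1),
            y ^ k / gammaMu μ k * (c (i-k) * (bco μ (i-k) * bco μ (i-k)) / gammaMu μ (i-k)) +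
          (16*μ^2 + 8*μ*y) * ∑ k ∈ Finset.range (i+1),
            thetaFn k * y ^ k / gammaMu μ k * (c (i-k) * thetaFn (i-k) / gammaMu μ (i-k)) +
          y^2 * ∑ k ∈ Finset.range (i+1),
            y ^ k / gammaMu μ k * (c (i-k) / gammaMu μ (i-k)) +
          2 * ∑ k ∈ Finset.range (i+1),
            bco μ k * y ^ k / gammaMu μ k * (c (i-k) * bco μ (i-k) / gammaMu μ (i-k)) -
          8*μ * ∑ k ∈ Finset.range (i+1),
            thetaFn k * bco μ k * y ^ k / gammaMu μ k *
              (c (i-k) * thetaFn (i-k) / gammaMu μ (i-k)) -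
          8*μ * ∑ k ∈ Finset.range (i+1),
            thetaFn k * y ^ k / gammaMu μ k *
              (c (i-k) * (thetaFn (i-k) * bco μ (i-k)) / gammaMu μ (i-k)) -
          2*y * ∑ k ∈ Finset.range (i+1),
            bco μ k * y ^ k / gammaMu μ k * (c (i-k) / gammaMu μ (i-k)) -
          2*y * ∑ k ∈ Finset.range (i+1),
            y ^ k / gammaMu μ k * (c (i-k) * bco μ (i-k) / gammaMu μ (i-k)))) := by
    intro i
    rw [show ((i:ℝ) + 2 * μ * thetaFn i) = bco μ i from rfl]
    rw [qPoly, Finset.sum_div, Finset.sum_mul]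
    simp only [Finset.mul_sum, ← Finset.sum_add_distrib, ← Finset.sum_sub_distrib]
    refine Finset.sum_congr rfl fun j hj => ?_
    have hj' : j ≤ i := Nat.lt_succ_iff.mp (Finset.mem_range.mp hj)
    set m := i - j with hm
    have hji : j + m = i := by omega
    have hbi : bco μ i = bco μ (j + m) := by rw [hji]
    rw [hbi, bco_add]
    have hxy : x = y / (n:ℝ) := by rw [eq_div_iff hn0, hy]; ring
    rw [hxy]
    have hγi := (gammaMu_pos hμ i).ne'
    have hγj := (gammaMu_pos hμ j).ne'
    have hγm := (gammaMu_pos hμ m).ne'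
    rcases Nat.even_or_odd j with hj1 | hj1 <;> rcases Nat.even_or_odd m with hm1 | hm1
    · rw [thetaFn_even hj1, thetaFn_even hm1]; field_simp; ring
    · rw [thetaFn_even hj1, thetaFn_odd (Nat.not_even_iff_odd.mpr hm1)]; field_simp; ring
    · rw [thetaFn_odd (Nat.not_even_iff_odd.mpr hj1), thetaFn_even hm1]; field_simp; ring
    · rw [thetaFn_odd (Nat.not_even_iff_odd.mpr hj1),
        thetaFn_odd (Nat.not_even_iff_odd.mpr hm1)]; field_simp; ring
  rw [tsum_congr key, htot.tsum_eq]
  -- rewrite the operator expressions on the right-hand side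
  rw [dunklOp2_Qf_one hμ Hc, deriv_dunklOp_Qf_one hμ Hc, dunklOp_derivQf_one hμ Hc,
    dunklOp_Qf_one hμ Hc, dunklOp_Qf_neg_one hμ Hc, deriv2_Qf_one hμ Hc,
    deriv_Qf_eq hμ Hc, Qf_eq_dser μ c]
  have hxy : x = y / (n:ℝ) := by rw [eq_div_iff hn0, hy]; ring
  rw [hxy]
  have hE' := hEpos.ne'
  have hA0' := hA0pos.ne'
  field_simp
  ring
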